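/- Let S be the 3×3 real matrix with rows (0, 1, 0), (1, 0, 0), (0, 0, -1). If x : ZMod 8 → (Fin 3 → ℝ) satisfies the Eckart condition, then the map y defined by y i = S.mulVec (x (3 - i)) also satisfies the Eckart condition. (This is a reversal generator of the D₈-action on standard realizations.) -/

import Mathlib

open Real Matrix

/-- The planar regular octagon reference configuration:
`xpln i = (cos ((2i-1)π/8), sin ((2i-1)π/8), 0)`, using the integer lift `i.val`;
this is well defined on `ZMod 8` since the expression is unchanged under `i ↦ i + 8`. -/
noncomputable def xpln (i : ZMod 8) : Fin 3 → ℝ :=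
  ![Real.cos ((2 * (i.val : ℝ) - 1) * π / 8), Real.sin ((2 * (i.val : ℝ) - 1) * π / 8), 0]

/-- The Eckart condition with respect to the reference octagon `xpln`. -/
def EckartCondition (x : ZMod 8 → Fin 3 → ℝ) : Prop :=
  (∑ i : ZMod 8, x i = 0) ∧ (∑ i : ZMod 8, (xpln i) ⨯₃ (x i) = 0)

/-- The rotation by `π` about the axis `(1,1,0)ᵀ`. -/
def S : Matrix (Fin 3) (Fin 3) ℝ :=
  !![0, 1, 0;
     1, 0, 0;
     0, 0, -1]

lemma key (a b : ℝ) (k : ℤ) (h : a + b = π/2 + k * (2*π)) :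
    Real.cos a = Real.sin b ∧ Real.sin a = Real.cos b := by
  have ha : a = π/2 - b + k*(2*π) := by linarith
  constructor
  · rw [ha, Real.cos_add_int_mul_two_pi, Real.cos_pi_div_two_sub]
  · rw [ha, Real.sin_add_int_mul_two_pi, Real.sin_pi_div_two_sub]

lemma hSx (v w : ℕ) (k : ℤ)
    (hk : (2*(w:ℝ)-1)*π/8 + (2*(v:ℝ)-1)*π/8 = π/2 + k * (2*π)) :
    (![Real.cos ((2*(w:ℝ)-1)*π/8), Real.sin ((2*(w:ℝ)-1)*π/8), 0] : Fin 3 → ℝ)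
      = S.mulVec ![Real.cos ((2*(v:ℝ)-1)*π/8), Real.sin ((2*(v:ℝ)-1)*π/8), 0] := by
  obtain ⟨h1, h2⟩ := key _ _ k hk
  funext i
  fin_cases i <;>
    simp [S, Matrix.mulVec, dotProduct, Fin.sum_univ_three, h1, h2]

lemma hxpln (j : ZMod 8) : xpln (3 - j) = S.mulVec (xpln j) := by
  fin_cases j
  · exact hSx 0 3 0 (by push_cast; ring)
  · exact hSx 1 2 0 (by push_cast; ring)
  · exact hSx 2 1 0 (by push_cast; ring)
  · exact hSx 3 0 0 (by push_cast; ring)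
  · exact hSx 4 7 1 (by push_cast; ring)
  · exact hSx 5 6 1 (by push_cast; ring)
  · exact hSx 6 5 1 (by push_cast; ring)
  · exact hSx 7 4 1 (by push_cast; ring)

lemma crossS (a v : Fin 3 → ℝ) :
    (S.mulVec a) ⨯₃ (S.mulVec v) = S.mulVec (a ⨯₃ v) := by
  funext i
  fin_cases i <;>
    simp [S, Matrix.mulVec, dotProduct, Fin.sum_univ_three, cross_apply] <;> ring

theorem eckartCondition_of_reversal
    (x : ZMod 8 → Fin 3 → ℝ) (hx : EckartCondition x) :
    EckartCondition (fun i => S.mulVec (x (3 - i))) := by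
  obtain ⟨h1, h2⟩ := hx
  constructor
  · have hre : ∑ i : ZMod 8, x (3 - i) = ∑ i : ZMod 8, x i :=
      Fintype.sum_equiv (Equiv.subLeft 3) _ _ (fun i => rfl)
    calc ∑ i : ZMod 8, S.mulVec (x (3 - i))
        = S.mulVecLin (∑ i : ZMod 8, x (3 - i)) := by
          rw [map_sum]; rfl
      _ = 0 := by rw [hre, h1, map_zero]
  · have hre : ∑ i : ZMod 8, (xpln i) ⨯₃ (S.mulVec (x (3 - i)))
        = ∑ j : ZMod 8, (xpln (3 - j)) ⨯₃ (S.mulVec (x j)) := by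
      refine Fintype.sum_equiv (Equiv.subLeft 3) _ _ (fun j => ?_)
      simp [Equiv.subLeft]
    calc ∑ i : ZMod 8, (xpln i) ⨯₃ (S.mulVec (x (3 - i)))
        = ∑ j : ZMod 8, S.mulVec ((xpln j) ⨯₃ (x j)) := by
          rw [hre]; exact Finset.sum_congr rfl (fun j _ => by rw [hxpln, crossS])
      _ = S.mulVecLin (∑ j : ZMod 8, (xpln j) ⨯₃ (x j)) := by
          rw [map_sum]; rfl
      _ = 0 := by rw [h2, map_zero]
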